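/- Let S be a nontrivial anti-bounded semiring. The following are equivalent: (1) S is congruence-simple; (2) S is ideal-simple; (3) S is a simple ring (every element of S has an additive inverse and S is ideal-simple), or S is isomorphic to the Boolean semifield B. -/

import Mathlib

universe u

/-- A semiring is congruence-simple if it is nontrivial and its only semiring
congruences are the diagonal one and the universal one. -/
def IsCongruenceSimple (S : Type u) [Semiring S] : Prop :=
  Nontrivial S ∧ ∀ c : RingCon S, c = ⊥ ∨ c = ⊤

/-- A semiring is ideal-simple if it is nontrivial and its only two-sided ideals
(additive submonoids closed under left and right multiplication) are `0` and `S`. -/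
def IsIdealSimple (S : Type u) [Semiring S] : Prop :=
  Nontrivial S ∧ ∀ I : AddSubmonoid S,
    (∀ a ∈ I, ∀ s : S, s * a ∈ I ∧ a * s ∈ I) → I = ⊥ ∨ I = ⊤

/-- `S` is (isomorphic to) the Boolean semifield `B = {0, 1}` with `1 + 1 = 1`. -/
def IsBooleanSemifield (S : Type u) [Semiring S] : Prop :=
  (∀ x : S, x = 0 ∨ x = 1) ∧ (0 : S) ≠ 1 ∧ (1 : S) + 1 = 1

section AuxSemiringSimple

variable {S : Type u} [Semiring S]



/-- Boolean semifield is congruence-simple. -/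
lemma aux_boolean_cs [Nontrivial S] (hB : IsBooleanSemifield S) : IsCongruenceSimple S := by
  obtain ⟨hx, h01, -⟩ := hB
  refine ⟨‹_›, fun c => ?_⟩
  by_cases h : c 0 1
  · right
    refine eq_top_iff.mpr fun a b _ => ?_
    rcases hx a with ha | ha <;> rcases hx b with hb | hb <;> subst ha <;> subst hb
    · exact c.refl 0
    · exact h
    · exact c.symm h
    · exact c.refl 1
  · left
    refine eq_bot_iff.mpr fun a b hc => show a = b from ?_
    rcases hx a with ha | ha <;> rcases hx b with hb | hb <;> subst ha <;> subst hb
    · rfl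
    · exact absurd hc h
    · exact absurd (c.symm hc) h
    · rfl

/-- Boolean semifield is ideal-simple. -/
lemma aux_boolean_is [Nontrivial S] (hB : IsBooleanSemifield S) : IsIdealSimple S := by
  obtain ⟨hx, h01, -⟩ := hB
  refine ⟨‹_›, fun I hmul => ?_⟩
  by_cases h : ∃ a ∈ I, a ≠ 0
  · right
    obtain ⟨a, haI, ha⟩ := h
    have h1 : (1 : S) ∈ I := (hx a).resolve_left ha ▸ haI
    refine (AddSubmonoid.eq_top_iff' I).mpr fun s => ?_
    have := (hmul 1 h1 s).1
    rwa [mul_one] at this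
  · left
    push_neg at h
    exact (AddSubmonoid.eq_bot_iff_forall I).mpr fun x hxI => h x hxI

/-- A simple ring is congruence-simple. -/
lemma aux_ring_cs [Nontrivial S] (hr : ∀ a : S, ∃ b : S, a + b = 0)
    (hIS : IsIdealSimple S) : IsCongruenceSimple S := by
  refine ⟨‹_›, fun c => ?_⟩
  set I : AddSubmonoid S :=
    { carrier := { a | c a 0 }
      zero_mem' := c.refl 0
      add_mem' := fun {a b} ha hb => by simpa using c.add ha hb } with hIdef
  have hmul : ∀ a ∈ I, ∀ s : S, s * a ∈ I ∧ a * s ∈ I := by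
    intro a ha s
    constructor
    · have := c.mul (c.refl s) ha; show c (s * a) 0; simpa using this
    · have := c.mul ha (c.refl s); show c (a * s) 0; simpa using this
  rcases hIS.2 I hmul with h | h
  · left
    refine eq_bot_iff.mpr fun a b hc => show a = b from ?_
    obtain ⟨b', hb'⟩ := hr b
    have h1 : c (a + b') 0 := by
      have := c.add hc (c.refl b'); rwa [hb'] at this
    have h2 : a + b' = 0 := (AddSubmonoid.eq_bot_iff_forall I).mp h _ h1
    calc a = a + (b + b') := by rw [hb', add_zero]
    _ = (a + b') + b := by abel
    _ = b := by rw [h2, zero_add]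
  · right
    have h10 : c 1 0 := (AddSubmonoid.eq_top_iff' I).mp h 1
    have hall : ∀ x : S, c x 0 := fun x => by
      have := c.mul (c.refl x) h10; simpa using this
    exact eq_top_iff.mpr fun a b _ => c.trans (hall a) (c.symm (hall b))


/-- Main lemma: an ideal-simple zerosumfree anti-bounded semiring is Boolean. -/
lemma aux_main_boolean [Nontrivial S]
    (hab : ∀ a : S, (∃ b : S, a + b = 0) ∨ (∃ s : S, a = 1 + s))
    (hzs : ∀ a b : S, a + b = 0 → a = 0)
    (hI : ∀ I : AddSubmonoid S,
      (∀ a ∈ I, ∀ s : S, s * a ∈ I ∧ a * s ∈ I) → I = ⊥ ∨ I = ⊤) :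
    IsBooleanSemifield S := by
  have h01 : (0 : S) ≠ 1 := fun h => one_ne_zero h.symm
  have hone : ∀ a : S, a ≠ 0 → ∃ s, a = 1 + s := by
    intro a ha
    rcases hab a with ⟨b, hb⟩ | hs
    · exact absurd (hzs a b hb) ha
    · exact hs
  -- Step A : ∃ s, s + s = 1
  have hA : ∃ s : S, s + s = 1 := by
    set I2 : AddSubmonoid S :=
      { carrier := { x | ∃ s, s + s = x }
        zero_mem' := ⟨0, add_zero 0⟩
        add_mem' := by
          rintro x y ⟨s, rfl⟩ ⟨t, rfl⟩
          exact ⟨s + t, by rw [add_add_add_comm]⟩ } with hI2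
    have hmul : ∀ a ∈ I2, ∀ s : S, s * a ∈ I2 ∧ a * s ∈ I2 := by
      rintro a ⟨w, rfl⟩ s
      exact ⟨⟨s * w, (mul_add s w w).symm⟩, ⟨w * s, (add_mul w w s).symm⟩⟩
    rcases hI I2 hmul with h | h
    · exfalso
      have hm : (1 : S) + 1 ∈ I2 := ⟨1, rfl⟩
      have h0 := (AddSubmonoid.eq_bot_iff_forall I2).mp h _ hm
      exact h01 (hzs 1 1 h0).symm
    · exact (AddSubmonoid.eq_top_iff' I2).mp h 1
  -- Step A' : 1 + u = 1 with u ≠ 0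
  obtain ⟨s, hs⟩ := hA
  have hs0 : s ≠ 0 := fun h => h01 (by rw [h, add_zero] at hs; exact hs)
  obtain ⟨t, rfl⟩ := hone s hs0
  have h1u : 1 + (1 + (t + t)) = 1 := by
    rw [show (1:S) + (1 + (t + t)) = (1 + t) + (1 + t) from by abel, hs]
  have hu0 : (1 : S) + (t + t) ≠ 0 := fun h => h01 (hzs 1 (t + t) h).symm
  -- Step B : ∃ y, 1 + y = y
  have hB : ∃ y : S, 1 + y = y := by
    set K : AddSubmonoid S :=
      { carrier := { x | ∃ y, x + y = y }
        zero_mem' := ⟨0, zero_add 0⟩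
        add_mem' := by
          rintro a b ⟨y, hy⟩ ⟨z, hz⟩
          exact ⟨y + z, by rw [add_add_add_comm, hy, hz]⟩ } with hK
    have hmul : ∀ a ∈ K, ∀ s : S, s * a ∈ K ∧ a * s ∈ K := by
      rintro a ⟨y, hy⟩ s
      constructor
      · exact ⟨s * y, by rw [← mul_add, hy]⟩
      · exact ⟨y * s, by rw [← add_mul, hy]⟩
    rcases hI K hmul with h | h
    · exfalso
      have hm : (1 : S) + (t + t) ∈ K := ⟨1, by rw [add_comm, h1u]⟩
      exact hu0 ((AddSubmonoid.eq_bot_iff_forall K).mp h _ hm)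
    · exact (AddSubmonoid.eq_top_iff' K).mp h 1
  obtain ⟨y₁, hy₁⟩ := hB
  have hy₁0 : y₁ ≠ 0 := fun h => h01 (by rw [h, add_zero] at hy₁; exact hy₁.symm)
  -- Step C : the context-absorption ideal
  have hX : ∀ x : S, x = 0 ∨ ∀ u v : S, u * v + u * x * v = u * x * v := by
    set X : AddSubmonoid S :=
      { carrier := { x | x = 0 ∨ ∀ u v : S, u * v + u * x * v = u * x * v }
        zero_mem' := Or.inl rfl
        add_mem' := by
          rintro a b (rfl | ha) hb
          · simpa using hb
          · rcases hb with rfl | hb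
            · simpa using Or.inr ha
            · refine Or.inr fun u v => ?_
              have e : u * (a + b) * v = u * a * v + u * b * v := by
                rw [mul_add, add_mul]
              rw [e, ← add_assoc, ha u v] } with hXdef
    have hmul : ∀ a ∈ X, ∀ r : S, r * a ∈ X ∧ a * r ∈ X := by
      rintro a (rfl | ha) r
      · constructor <;> simp [AddSubmonoid.zero_mem]
      · by_cases hr : r = 0
        · subst hr; constructor <;> simp [AddSubmonoid.zero_mem]
        · obtain ⟨w, rfl⟩ := hone r hr
          constructor
          · refine Or.inr fun u v => ?_
            have e : u * ((1 + w) * a) * v = u * a * v + u * (w * a) * v := by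
              rw [add_mul, one_mul, mul_add, add_mul]
            rw [e, ← add_assoc, ha u v]
          · refine Or.inr fun u v => ?_
            have e : u * (a * (1 + w)) * v = u * a * v + u * (a * w) * v := by
              rw [mul_add, mul_one, mul_add, add_mul]
            rw [e, ← add_assoc, ha u v]
    rcases hI X hmul with h | h
    · exfalso
      have hm : y₁ ∈ X := by
        refine Or.inr fun u v => ?_
        conv_rhs => rw [← hy₁]
        rw [mul_add, mul_one, add_mul]
      exact hy₁0 ((AddSubmonoid.eq_bot_iff_forall X).mp h _ hm)
    · intro x
      exact (AddSubmonoid.eq_top_iff' X).mp h x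
  have habs1 : ∀ x : S, x ≠ 0 → 1 + x = x := by
    intro x hx
    have := ((hX x).resolve_left hx) 1 1
    simpa using this
  have hidem : (1 : S) + 1 = 1 := habs1 1 one_ne_zero
  have hidem' : ∀ z : S, z + z = z := fun z => by
    calc z + z = z * (1 + 1) := by rw [mul_add, mul_one]
    _ = z := by rw [hidem, mul_one]
  -- key : every nonzero element equals 1
  have key : ∀ a : S, a ≠ 0 → a = 1 := by
    intro a ha
    set Ca : AddSubmonoid S := AddSubmonoid.closure { y | ∃ u v : S, y = u * a * v } with hCa
    have hmulC : ∀ b ∈ Ca, ∀ r : S, r * b ∈ Ca ∧ b * r ∈ Ca := by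
      intro b hb
      induction hb using AddSubmonoid.closure_induction with
      | mem x hx =>
        obtain ⟨u, v, rfl⟩ := hx
        intro r
        constructor
        · exact AddSubmonoid.subset_closure ⟨r * u, v, by rw [← mul_assoc, ← mul_assoc]⟩
        · exact AddSubmonoid.subset_closure ⟨u, v * r, by rw [mul_assoc (u*a) v r]⟩
      | zero => intro r; constructor <;> simp [AddSubmonoid.zero_mem]
      | add x y hx hy ihx ihy =>
        intro r
        constructor
        · rw [mul_add]; exact AddSubmonoid.add_mem _ (ihx r).1 (ihy r).1
        · rw [add_mul]; exact AddSubmonoid.add_mem _ (ihx r).2 (ihy r).2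
    rcases hI Ca hmulC with h | h
    · exfalso
      have hm : a ∈ Ca := AddSubmonoid.subset_closure ⟨1, 1, by rw [one_mul, mul_one]⟩
      exact ha ((AddSubmonoid.eq_bot_iff_forall Ca).mp h _ hm)
    · have h1C : (1 : S) ∈ Ca := (AddSubmonoid.eq_top_iff' Ca).mp h 1
      have claim : ∀ x ∈ Ca, x + 1 = 1 → x = 0 ∨ ∃ u v : S, u * a * v = 1 := by
        intro x hx
        induction hx using AddSubmonoid.closure_induction with
        | mem x hx =>
          intro hx1
          by_cases hx0 : x = 0
          · exact Or.inl hx0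
          · refine Or.inr ?_
            obtain ⟨u, v, rfl⟩ := hx
            refine ⟨u, v, ?_⟩
            have e1 := habs1 _ hx0
            calc u * a * v = 1 + u * a * v := e1.symm
            _ = u * a * v + 1 := add_comm _ _
            _ = 1 := hx1
        | zero => intro _; exact Or.inl rfl
        | add x y hxm hym ihx ihy =>
          intro hxy1
          have hx1 : x + 1 = 1 := by
            have e : x + 1 = x + (x + y + 1) := by rw [hxy1]
            have e2 : x + (x + y + 1) = x + y + 1 := by
              calc x + (x + y + 1) = (x + x) + (y + 1) := by abel
              _ = x + (y + 1) := by rw [hidem']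
              _ = x + y + 1 := (add_assoc _ _ _).symm
            rw [e, e2, hxy1]
          have hy1 : y + 1 = 1 := by
            have e : y + 1 = y + (x + y + 1) := by rw [hxy1]
            have e2 : y + (x + y + 1) = x + y + 1 := by
              calc y + (x + y + 1) = (y + y) + (x + 1) := by abel
              _ = y + (x + 1) := by rw [hidem']
              _ = x + y + 1 := by abel
            rw [e, e2, hxy1]
          rcases ihx hx1 with h0 | hE
          · rcases ihy hy1 with h0' | hE'
            · exact Or.inl (by rw [h0, h0', add_zero])
            · exact Or.inr hE'
          · exact Or.inr hE
      rcases claim 1 h1C hidem with h0 | ⟨u, v, huv⟩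
      · exact absurd h0 one_ne_zero
      · -- Step F : a = 1
        have hu0 : u ≠ 0 := fun h => by rw [h, zero_mul, zero_mul] at huv; exact h01 huv
        have hv0 : v ≠ 0 := fun h => by rw [h, mul_zero] at huv; exact h01 huv
        have ha1 : 1 + a = a := habs1 a ha
        have hu1 : 1 + u = u := habs1 u hu0
        have hv1 : 1 + v = v := habs1 v hv0
        have e1 : a + a * v = a * v := by
          calc a + a * v = a * (1 + v) := by rw [mul_add, mul_one]
          _ = a * v := by rw [hv1]
        have e2 : a * v + u * (a * v) = u * (a * v) := by
          calc a * v + u * (a * v) = (1 + u) * (a * v) := by rw [add_mul, one_mul]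
          _ = u * (a * v) := by rw [hu1]
        have e3 : a + u * a * v = u * a * v := by
          calc a + u * a * v = a + u * (a * v) := by rw [mul_assoc]
          _ = (a + a * v) + u * (a * v) := by rw [add_assoc, e2]
          _ = a * v + u * (a * v) := by rw [e1]
          _ = u * (a * v) := e2
          _ = u * a * v := (mul_assoc _ _ _).symm
        have ha_le : a + 1 = 1 := by rw [← huv]; exact e3
        calc a = 1 + a := ha1.symm
        _ = a + 1 := add_comm _ _
        _ = 1 := ha_le
  refine ⟨fun x => ?_, h01, hidem⟩
  by_cases hx : x = 0
  · exact Or.inl hx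
  · exact Or.inr (key x hx)

/-- In a ring, congruence-simple implies ideal-simple. -/
lemma aux_ring_cs_to_is [Nontrivial S] (hr : ∀ a : S, ∃ b : S, a + b = 0)
    (hCS : IsCongruenceSimple S) : IsIdealSimple S := by
  refine ⟨‹_›, fun I hmul => ?_⟩
  set c : RingCon S :=
    { r := fun a b => ∃ i, i ∈ I ∧ ∃ j, j ∈ I ∧ a + i = b + j
      iseqv := by
        refine ⟨fun a => ⟨0, I.zero_mem, 0, I.zero_mem, rfl⟩, ?_, ?_⟩
        · rintro a b ⟨i, hi, j, hj, hij⟩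
          exact ⟨j, hj, i, hi, hij.symm⟩
        · rintro a b d ⟨i, hi, j, hj, h1⟩ ⟨i', hi', j', hj', h2⟩
          refine ⟨i + i', I.add_mem hi hi', j' + j, I.add_mem hj' hj, ?_⟩
          calc a + (i + i') = (a + i) + i' := (add_assoc _ _ _).symm
          _ = (b + j) + i' := by rw [h1]
          _ = (b + i') + j := by abel
          _ = (d + j') + j := by rw [h2]
          _ = d + (j' + j) := add_assoc _ _ _
      add' := by
        rintro a b x y ⟨i, hi, j, hj, h1⟩ ⟨k, hk, l, hl, h2⟩
        refine ⟨i + k, I.add_mem hi hk, j + l, I.add_mem hj hl, ?_⟩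
        calc (a + x) + (i + k) = (a + i) + (x + k) := by abel
        _ = (b + j) + (y + l) := by rw [h1, h2]
        _ = (b + y) + (j + l) := by abel
      mul' := by
        rintro a b x y ⟨i, hi, j, hj, h1⟩ ⟨k, hk, l, hl, h2⟩
        refine ⟨a * k + i * x + i * k,
          I.add_mem (I.add_mem (hmul k hk a).1 (hmul i hi x).2) (hmul k hk i).1,
          b * l + j * y + j * l,
          I.add_mem (I.add_mem (hmul l hl b).1 (hmul j hj y).2) (hmul l hl j).1, ?_⟩
        have e1 : (a + i) * (x + k) = (b + j) * (y + l) := by rw [h1, h2]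
        calc a * x + (a * k + i * x + i * k) = (a + i) * (x + k) := by
              rw [add_mul, mul_add, mul_add]; abel
        _ = (b + j) * (y + l) := e1
        _ = b * y + (b * l + j * y + j * l) := by
              rw [add_mul, mul_add, mul_add]; abel } with hc
  rcases hCS.2 c with h | h
  · left
    refine (AddSubmonoid.eq_bot_iff_forall I).mpr fun a haI => ?_
    have hrel : c a 0 := ⟨0, I.zero_mem, a, haI, by rw [add_zero, zero_add]⟩
    rw [h] at hrel
    exact hrel
  · right
    have hrel : c 1 0 := by rw [h]; trivial
    obtain ⟨i, hi, j, hj, hij⟩ := hrel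
    obtain ⟨x, hx⟩ := hr 1
    have hix : i * x ∈ I := (hmul i hi x).2
    have h1 : (1 : S) = j + i * x := by
      have e : i + i * x = 0 := by
        calc i + i * x = i * (1 + x) := by rw [mul_add, mul_one]
        _ = 0 := by rw [hx, mul_zero]
      calc (1 : S) = 1 + (i + i * x) := by rw [e, add_zero]
      _ = (1 + i) + i * x := (add_assoc _ _ _).symm
      _ = (0 + j) + i * x := by rw [hij]
      _ = j + i * x := by rw [zero_add]
    have h1I : (1 : S) ∈ I := h1 ▸ I.add_mem hj hix
    refine (AddSubmonoid.eq_top_iff' I).mpr fun s => ?_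
    have := (hmul 1 h1I s).1
    rwa [mul_one] at this

/-- Congruence-simple anti-bounded implies simple-ring-or-Boolean. -/
lemma aux_cs_to_three [Nontrivial S]
    (hab : ∀ a : S, (∃ b : S, a + b = 0) ∨ (∃ s : S, a = 1 + s))
    (hCS : IsCongruenceSimple S) :
    ((∀ a : S, ∃ b : S, a + b = 0) ∧ IsIdealSimple S) ∨ IsBooleanSemifield S := by
  set c₁ : RingCon S :=
    { r := fun a b => (∃ x, a + x = b) ∧ (∃ y, b + y = a)
      iseqv := by
        refine ⟨fun a => ⟨⟨0, add_zero a⟩, ⟨0, add_zero a⟩⟩, fun h => ⟨h.2, h.1⟩, ?_⟩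
        rintro a b d ⟨⟨x, hx⟩, ⟨y, hy⟩⟩ ⟨⟨x', hx'⟩, ⟨y', hy'⟩⟩
        exact ⟨⟨x + x', by rw [← add_assoc, hx, hx']⟩,
               ⟨y' + y, by rw [← add_assoc, hy', hy]⟩⟩
      add' := by
        rintro a b x y ⟨⟨u, hu⟩, ⟨u', hu'⟩⟩ ⟨⟨v, hv⟩, ⟨v', hv'⟩⟩
        exact ⟨⟨u + v, by rw [add_add_add_comm, hu, hv]⟩,
               ⟨u' + v', by rw [add_add_add_comm, hu', hv']⟩⟩
      mul' := by
        rintro a b x y ⟨⟨u, hu⟩, ⟨u', hu'⟩⟩ ⟨⟨v, hv⟩, ⟨v', hv'⟩⟩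
        constructor
        · refine ⟨a * v + u * x + u * v, ?_⟩
          rw [← hu, ← hv, add_mul, mul_add, mul_add]; abel
        · refine ⟨b * v' + u' * y + u' * v', ?_⟩
          rw [← hu', ← hv', add_mul, mul_add, mul_add]; abel } with hc₁
  rcases hCS.2 c₁ with h | h
  · -- c₁ = ⊥ : zerosumfree, use σ
    have hzs : ∀ a b : S, a + b = 0 → a = 0 := by
      intro a b hb
      have hrel : c₁ a 0 := ⟨⟨b, hb⟩, ⟨a, zero_add a⟩⟩
      rw [h] at hrel
      exact hrel
    have hone : ∀ a : S, a ≠ 0 → ∃ s, a = 1 + s := by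
      intro a ha
      rcases hab a with ⟨b, hb⟩ | hs
      · exact absurd (hzs a b hb) ha
      · exact hs
    have hadd0 : ∀ a b : S, a ≠ 0 → a + b ≠ 0 := fun a b ha h0 => ha (hzs a b h0)
    have hmul0 : ∀ a b : S, a ≠ 0 → b ≠ 0 → a * b ≠ 0 := by
      intro a b ha hb h0
      obtain ⟨w, rfl⟩ := hone b hb
      rw [mul_add, mul_one] at h0
      exact ha (hzs a (a * w) h0)
    set σ : RingCon S :=
      { r := fun a b => a = b ∨ (a ≠ 0 ∧ b ≠ 0)
        iseqv := by
          refine ⟨fun a => Or.inl rfl, ?_, ?_⟩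
          · rintro a b (rfl | ⟨ha, hb⟩)
            · exact Or.inl rfl
            · exact Or.inr ⟨hb, ha⟩
          · rintro a b d (rfl | ⟨ha, hb⟩) h2
            · exact h2
            · rcases h2 with rfl | ⟨hb', hd⟩
              · exact Or.inr ⟨ha, hb⟩
              · exact Or.inr ⟨ha, hd⟩
        add' := by
          rintro a b x y (rfl | ⟨ha, hb⟩) h2
          · rcases h2 with rfl | ⟨hx, hy⟩
            · exact Or.inl rfl
            · exact Or.inr ⟨by rw [add_comm]; exact hadd0 x a hx,
                by rw [add_comm]; exact hadd0 y a hy⟩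
          · exact Or.inr ⟨hadd0 a _ ha, hadd0 b _ hb⟩
        mul' := by
          rintro a b x y (rfl | ⟨ha, hb⟩) h2
          · rcases h2 with rfl | ⟨hx, hy⟩
            · exact Or.inl rfl
            · by_cases ha : a = 0
              · subst ha; exact Or.inl (by rw [zero_mul, zero_mul])
              · exact Or.inr ⟨hmul0 a x ha hx, hmul0 a y ha hy⟩
          · rcases h2 with rfl | ⟨hx, hy⟩
            · by_cases hx : x = 0
              · subst hx; exact Or.inl (by rw [mul_zero, mul_zero])
              · exact Or.inr ⟨hmul0 a x ha hx, hmul0 b x hb hx⟩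
            · exact Or.inr ⟨hmul0 a x ha hx, hmul0 b y hb hy⟩ } with hσ
    rcases hCS.2 σ with hσb | hσt
    · right
      have hall : ∀ a b : S, a ≠ 0 → b ≠ 0 → a = b := by
        intro a b ha hb
        have hrel : σ a b := Or.inr ⟨ha, hb⟩
        rw [hσb] at hrel
        exact hrel
      have h01 : (0 : S) ≠ 1 := fun h => one_ne_zero h.symm
      have h11 : (1 : S) + 1 = 1 := by
        have hne : (1 : S) + 1 ≠ 0 := hadd0 1 1 one_ne_zero
        exact hall _ _ hne one_ne_zero
      refine ⟨fun x => ?_, h01, h11⟩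
      by_cases hx : x = 0
      · exact Or.inl hx
      · exact Or.inr (hall x 1 hx one_ne_zero)
    · exfalso
      have hrel : σ 0 1 := by rw [hσt]; trivial
      rcases hrel with h0 | ⟨h0, -⟩
      · exact one_ne_zero h0.symm
      · exact h0 rfl
  · -- c₁ = ⊤ : S is a ring
    left
    have hrel : c₁ 1 0 := by rw [h]; trivial
    obtain ⟨⟨x, hx⟩, -⟩ := hrel
    have hr : ∀ a : S, ∃ b : S, a + b = 0 := by
      intro a
      refine ⟨a * x, ?_⟩
      calc a + a * x = a * (1 + x) := by rw [mul_add, mul_one]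
      _ = 0 := by rw [hx, mul_zero]
    exact ⟨hr, aux_ring_cs_to_is hr hCS⟩


/-- Ideal-simple anti-bounded implies simple-ring-or-Boolean. -/
lemma aux_is_to_three [Nontrivial S]
    (hab : ∀ a : S, (∃ b : S, a + b = 0) ∨ (∃ s : S, a = 1 + s))
    (hIS : IsIdealSimple S) :
    ((∀ a : S, ∃ b : S, a + b = 0) ∧ IsIdealSimple S) ∨ IsBooleanSemifield S := by
  set V : AddSubmonoid S :=
    { carrier := { a | ∃ b, a + b = 0 }
      zero_mem' := ⟨0, add_zero 0⟩
      add_mem' := by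
        rintro a a' ⟨b, hb⟩ ⟨b', hb'⟩
        exact ⟨b + b', by rw [add_add_add_comm, hb, hb', add_zero]⟩ } with hV
  have hmul : ∀ a ∈ V, ∀ s : S, s * a ∈ V ∧ a * s ∈ V := by
    rintro a ⟨b, hb⟩ s
    constructor
    · exact ⟨s * b, by rw [← mul_add, hb, mul_zero]⟩
    · exact ⟨b * s, by rw [← add_mul, hb, zero_mul]⟩
  rcases hIS.2 V hmul with h | h
  · right
    have hzs : ∀ a b : S, a + b = 0 → a = 0 := fun a b hb =>
      (AddSubmonoid.eq_bot_iff_forall V).mp h a ⟨b, hb⟩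
    exact aux_main_boolean hab hzs hIS.2
  · left
    exact ⟨fun a => (AddSubmonoid.eq_top_iff' V).mp h a, hIS⟩

end AuxSemiringSimple

/-- for a nontrivial anti-bounded semiring `S`, the following are
equivalent: (1) `S` is congruence-simple; (2) `S` is ideal-simple; (3) `S` is a
simple ring (every element has an additive inverse and `S` is ideal-simple), or
`S ≅ B`. -/


theorem antibounded_congruenceSimple_iff_idealSimple
    (S : Type u) [Semiring S] [Nontrivial S]
    (hab : ∀ a : S, (∃ b : S, a + b = 0) ∨ (∃ s : S, a = 1 + s)) :
    (IsCongruenceSimple S ↔ IsIdealSimple S) ∧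
    (IsIdealSimple S ↔
      (((∀ a : S, ∃ b : S, a + b = 0) ∧ IsIdealSimple S) ∨
        IsBooleanSemifield S)) := by
  have h1 : IsCongruenceSimple S → IsIdealSimple S := fun h =>
    (aux_cs_to_three hab h).elim (fun h => h.2) aux_boolean_is
  have h2 : IsIdealSimple S → IsCongruenceSimple S := fun h =>
    (aux_is_to_three hab h).elim (fun h => aux_ring_cs h.1 h.2) aux_boolean_cs
  refine ⟨⟨h1, h2⟩, ⟨aux_is_to_three hab, ?_⟩⟩
  rintro (⟨-, h⟩ | hB)
  · exact h
  · exact aux_boolean_is hB
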